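/- arXiv:2106.07072 — 2 statements merged into one kernel-verified Lean document; each statement's English description precedes it below -/
import Mathlib

section
/- Let k ≥ 2 and let H be a k-uniform hypergraph. Then H admits a rainbow-free k-colouring if and only if there exists a non-empty proper subset S ⊊ V(H) such that the induced (k-1)-uniform hypergraph H_S admits a rainbow-free (k-1)-colouring. Moreover, in this case there is a rainbow-free k-colouring c of H with c⁻¹(k) = S. -/
open Finset

/-- A `k`-uniform hypergraph on a vertex type `α`. -/
structure UniformHypergraph (α : Type*) [DecidableEq α] (k : ℕ) where
  verts : Finset α
  edges : Finset (Finset α)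
  edge_sub : ∀ e ∈ edges, e ⊆ verts
  edge_card : ∀ e ∈ edges, e.card = k

variable {α : Type*} [DecidableEq α]

/-- The induced `k`-uniform subhypergraph `H_S` of a `(k+1)`-uniform hypergraph. -/
def UniformHypergraph.induced {k : ℕ} (H : UniformHypergraph α (k + 1)) (S : Finset α) :
    UniformHypergraph α k where
  verts := H.verts \ S
  edges := (H.edges.filter fun e => (e ∩ S).card = 1).image fun e => e \ S
  edge_sub := by
    intro e he
    simp only [mem_image, mem_filter] at he
    obtain ⟨f, ⟨hf, _⟩, rfl⟩ := he
    exact sdiff_subset_sdiff (H.edge_sub f hf) le_rfl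
  edge_card := by
    intro e he
    simp only [mem_image, mem_filter] at he
    obtain ⟨f, ⟨hf, hf1⟩, rfl⟩ := he
    have h := Finset.card_sdiff_add_card_inter f S
    have h2 := H.edge_card f hf
    omega

/-- A rainbow-free `k`-colouring: surjective onto the colours (on the vertex set)
and no hyperedge attains all `k` colours. -/
def IsRainbowFree {k : ℕ} (H : UniformHypergraph α k) (c : α → Fin k) : Prop :=
  (∀ i : Fin k, ∃ v ∈ H.verts, c v = i) ∧ ∀ e ∈ H.edges, e.image c ≠ Finset.univ

lemma part2 {k : ℕ} (hk : 1 ≤ k) (H : UniformHypergraph α (k + 1)) :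
    (∀ S : Finset α, S.Nonempty → S ⊂ H.verts →
      (∃ c' : α → Fin k, IsRainbowFree (H.induced S) c') →
      ∃ c : α → Fin (k + 1), IsRainbowFree H c ∧
        (H.verts.filter fun v => c v = Fin.last k) = S) := by
  intro S hSne hSsub ⟨c', hc'surj, hc'edge⟩
  classical
  set c : α → Fin (k+1) := fun v => if v ∈ S then Fin.last k else Fin.castSucc (c' v) with hc
  have hcS : ∀ v ∈ S, c v = Fin.last k := fun v hv => by simp [hc, hv]
  have hcNS : ∀ v, v ∉ S → c v = Fin.castSucc (c' v) := fun v hv => by simp [hc, hv]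
  refine ⟨c, ⟨?_, ?_⟩, ?_⟩
  · intro i
    rcases eq_or_ne i (Fin.last k) with rfl | hne
    · obtain ⟨s, hs⟩ := hSne
      exact ⟨s, hSsub.subset hs, hcS s hs⟩
    · obtain ⟨j, rfl⟩ := Fin.exists_castSucc_eq.2 hne
      obtain ⟨v, hv, hcv⟩ := hc'surj j
      simp only [UniformHypergraph.induced, mem_sdiff] at hv
      exact ⟨v, hv.1, by rw [hcNS v hv.2, hcv]⟩
  · intro e he hcontra
    have hlast : Fin.last k ∈ e.image c := hcontra ▸ mem_univ _
    obtain ⟨w, hw, hcw⟩ := mem_image.1 hlast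
    have hwS : w ∈ S := by
      by_contra hwn
      rw [hcNS w hwn] at hcw
      exact (Fin.castSucc_lt_last _).ne hcw
    have hinter : 1 ≤ (e ∩ S).card := card_pos.2 ⟨w, mem_inter.2 ⟨hw, hwS⟩⟩
    rcases eq_or_lt_of_le hinter with h1 | h2
    · -- |e ∩ S| = 1, use hc'edge
      have hedge' : e \ S ∈ (H.induced S).edges := by
        simp only [UniformHypergraph.induced, mem_image, mem_filter]
        exact ⟨e, ⟨he, h1.symm⟩, rfl⟩
      apply hc'edge _ hedge'
      apply eq_univ_iff_forall.2
      intro j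
      have : Fin.castSucc j ∈ e.image c := hcontra ▸ mem_univ _
      obtain ⟨v, hv, hcv⟩ := mem_image.1 this
      have hvn : v ∉ S := by
        intro hvS
        rw [hcS v hvS] at hcv
        exact (Fin.castSucc_lt_last j).ne' hcv
      rw [hcNS v hvn] at hcv
      exact mem_image.2 ⟨v, mem_sdiff.2 ⟨hv, hvn⟩, Fin.castSucc_injective _ hcv⟩
    · -- |e ∩ S| ≥ 2 : cardinality contradiction
      have hcard : (e.image c).card ≤ k := by
        have hsplit : e.image c ⊆ insert (Fin.last k) ((e \ S).image c) := by
          intro x hx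
          obtain ⟨v, hv, hcv⟩ := mem_image.1 hx
          by_cases hvS : v ∈ S
          · rw [← hcv, hcS v hvS]; exact mem_insert_self _ _
          · exact mem_insert_of_mem (mem_image.2 ⟨v, mem_sdiff.2 ⟨hv, hvS⟩, hcv⟩)
        calc (e.image c).card ≤ (insert (Fin.last k) ((e \ S).image c)).card :=
              card_le_card hsplit
          _ ≤ ((e \ S).image c).card + 1 := card_insert_le _ _
          _ ≤ (e \ S).card + 1 := by gcongr; exact card_image_le
          _ ≤ k := by
              have := Finset.card_sdiff_add_card_inter e S
              have := H.edge_card e he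
              omega
      rw [hcontra, card_univ, Fintype.card_fin] at hcard
      omega
  · apply Finset.ext
    intro v
    simp only [mem_filter]
    constructor
    · rintro ⟨hv, hcv⟩
      by_contra hvn
      rw [hcNS v hvn] at hcv
      exact (Fin.castSucc_lt_last _).ne hcv
    · intro hv
      exact ⟨hSsub.subset hv, hcS v hv⟩

/-- a `(k+1)`-uniform hypergraph (`k + 1 ≥ 2`) is rainbow-free colourable
iff some nonempty proper subset `S` of vertices gives a rainbow-free colourable induced
hypergraph `H_S`; moreover in that case there is a rainbow-free colouring with
`c⁻¹(last) = S`. -/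
theorem rainbowFree_colourable_iff_induced {k : ℕ} (hk : 1 ≤ k)
    (H : UniformHypergraph α (k + 1)) :
    ((∃ c : α → Fin (k + 1), IsRainbowFree H c) ↔
      ∃ S : Finset α, S.Nonempty ∧ S ⊂ H.verts ∧
        ∃ c' : α → Fin k, IsRainbowFree (H.induced S) c') ∧
    (∀ S : Finset α, S.Nonempty → S ⊂ H.verts →
      (∃ c' : α → Fin k, IsRainbowFree (H.induced S) c') →
      ∃ c : α → Fin (k + 1), IsRainbowFree H c ∧
        (H.verts.filter fun v => c v = Fin.last k) = S) := by
  classical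
  refine ⟨⟨?_, ?_⟩, part2 hk H⟩
  · rintro ⟨c, hcsurj, hcedge⟩
    set S := H.verts.filter (fun v => c v = Fin.last k) with hS
    have hSne : S.Nonempty := by
      obtain ⟨v, hv, hcv⟩ := hcsurj (Fin.last k)
      exact ⟨v, mem_filter.2 ⟨hv, hcv⟩⟩
    have h0ne : (0 : Fin (k+1)) ≠ Fin.last k := by
      intro h
      have := congrArg Fin.val h
      simp [Fin.last] at this
      omega
    obtain ⟨v0, hv0, hcv0⟩ := hcsurj 0
    have hv0S : v0 ∉ S := by
      simp only [hS, mem_filter, not_and]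
      intro _ h
      exact h0ne (hcv0 ▸ h)
    have hSsub : S ⊂ H.verts := ⟨filter_subset _ _, fun h => hv0S (h hv0)⟩
    set c' : α → Fin k := fun v =>
      if h : (c v : ℕ) < k then ⟨c v, h⟩ else ⟨0, hk⟩ with hc'
    have hkey : ∀ v, c v ≠ Fin.last k → Fin.castSucc (c' v) = c v := by
      intro v hv
      have hlt : (c v : ℕ) < k := by
        have := Fin.val_lt_last hv
        simpa [Fin.last] using this
      simp only [hc', dif_pos hlt]
      exact Fin.ext rfl
    refine ⟨S, hSne, hSsub, c', ?_, ?_⟩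
    · intro i
      obtain ⟨v, hv, hcv⟩ := hcsurj (Fin.castSucc i)
      have hvne : c v ≠ Fin.last k := hcv ▸ (Fin.castSucc_lt_last i).ne
      have hvS : v ∉ S := by simp [hS, hvne, hv]
      refine ⟨v, ?_, ?_⟩
      · simp only [UniformHypergraph.induced, mem_sdiff]; exact ⟨hv, hvS⟩
      · apply Fin.castSucc_injective
        rw [hkey v hvne, hcv]
    · intro e' he' hcontra
      simp only [UniformHypergraph.induced, mem_image, mem_filter] at he'
      obtain ⟨f, ⟨hf, hf1⟩, rfl⟩ := he'
      apply hcedge f hf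
      apply eq_univ_iff_forall.2
      intro j
      rcases eq_or_ne j (Fin.last k) with rfl | hjne
      · obtain ⟨w, hw⟩ := card_eq_one.1 hf1
        have hwf : w ∈ f ∩ S := hw ▸ mem_singleton_self w
        have := mem_inter.1 hwf
        exact mem_image.2 ⟨w, this.1, (mem_filter.1 this.2).2⟩
      · obtain ⟨j', rfl⟩ := Fin.exists_castSucc_eq.2 hjne
        have : j' ∈ (f \ S).image c' := hcontra ▸ mem_univ _
        obtain ⟨v, hv, hcv⟩ := mem_image.1 this
        have hvm := mem_sdiff.1 hv
        have hvne : c v ≠ Fin.last k := by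
          intro h
          exact hvm.2 (mem_filter.2 ⟨H.edge_sub f hf hvm.1, h⟩)
        refine mem_image.2 ⟨v, hvm.1, ?_⟩
        rw [← hkey v hvne, hcv]
  · rintro ⟨S, hSne, hSsub, hc'⟩
    obtain ⟨c, hc, -⟩ := part2 hk H S hSne hSsub hc'
    exact ⟨c, hc⟩
end

section
/- Let k ≥ 3 and n ≥ k. Let c and c' be two surjective colourings of an n-element set V, each with k-1 singleton colour classes and one class of size n-k+1, such that their large classes overlap in exactly n-k elements. Then the union of the rainbow transversal families of c and c' has cardinality exactly 2(n-k+1) - 1; i.e., the two families of rainbow transversals share exactly one common k-subset. -/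
open Finset

lemma rainbow_char {V : Type*} [Fintype V] [DecidableEq V]
    {k n : ℕ} (hk : 3 ≤ k) (hn : k ≤ n) (hV : Fintype.card V = n)
    (c : V → Fin k)
    (hsmall : ∀ i : Fin k, (i : ℕ) < k - 1 →
      (Finset.univ.filter fun v => c v = i).card = 1)
    (hbig : ∀ i : Fin k, (i : ℕ) = k - 1 →
      (Finset.univ.filter fun v => c v = i).card = n - k + 1) :
    ((Finset.univ.powersetCard k).filter fun e : Finset V =>
        ∀ i : Fin k, ∃ v ∈ e, c v = i)
      = (Finset.univ.filter fun v => (c v : ℕ) = k - 1).image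
          (fun b => insert b ((Finset.univ.filter fun v => (c v : ℕ) = k - 1)ᶜ)) := by
  set B : Finset V := Finset.univ.filter fun v => (c v : ℕ) = k - 1 with hB
  have ibig : Fin k := ⟨k - 1, by omega⟩
  have hBcard : B.card = n - k + 1 := by
    have := hbig ⟨k - 1, by omega⟩ rfl
    rw [hB]
    convert this using 2
    ext v
    simp [Fin.ext_iff]
  have hTcard : (Bᶜ).card = k - 1 := by
    have h1 : (Bᶜ).card = Fintype.card V - B.card := Finset.card_compl B
    have h2 : B.card ≤ Fintype.card V := Finset.card_le_univ B
    omega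
  ext e
  simp only [Finset.mem_filter, Finset.mem_powersetCard, Finset.mem_image]
  constructor
  · rintro ⟨⟨-, hcard⟩, hrb⟩
    obtain ⟨b, hb, hcb⟩ := hrb ⟨k - 1, by omega⟩
    have hbB : b ∈ B := by simp [hB, hcb]
    have hsub : insert b Bᶜ ⊆ e := by
      intro v hv
      rcases Finset.mem_insert.mp hv with rfl | hv
      · exact hb
      · have hvne : (c v : ℕ) ≠ k - 1 := by
          simpa [hB] using hv
        have hvlt : (c v : ℕ) < k - 1 := by
          have := (c v).isLt; omega
        obtain ⟨w, hw, hcw⟩ := hrb (c v)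
        have h1 := hsmall (c v) hvlt
        have : w = v := by
          have hwmem : w ∈ Finset.univ.filter fun u => c u = c v := by simp [hcw]
          have hvmem : v ∈ Finset.univ.filter fun u => c u = c v := by simp
          exact Finset.card_le_one.mp (le_of_eq h1) _ hwmem _ hvmem
        rwa [← this]
    have hbnT : b ∉ Bᶜ := by simp [hbB]
    have hicard : (insert b Bᶜ).card = k := by
      rw [Finset.card_insert_of_notMem hbnT, hTcard]; omega
    have := Finset.eq_of_subset_of_card_le hsub (by omega)
    exact ⟨b, hbB, this⟩
  · rintro ⟨b, hbB, rfl⟩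
    have hbnT : b ∉ Bᶜ := by simp [hbB]
    have hcb : (c b : ℕ) = k - 1 := by simpa [hB] using hbB
    refine ⟨⟨Finset.subset_univ _, ?_⟩, ?_⟩
    · rw [Finset.card_insert_of_notMem hbnT, hTcard]; omega
    · intro i
      by_cases hi : (i : ℕ) = k - 1
      · exact ⟨b, Finset.mem_insert_self _ _, Fin.ext (by omega)⟩
      · have hilt : (i : ℕ) < k - 1 := by have := i.isLt; omega
        obtain ⟨v, hv⟩ := Finset.card_eq_one.mp (hsmall i hilt)
        have hvi : c v = i := by
          have : v ∈ Finset.univ.filter fun u => c u = i := hv ▸ Finset.mem_singleton_self v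
          simpa using this
        refine ⟨v, ?_, hvi⟩
        exact Finset.mem_insert_of_mem (by simp [hB, hvi, hi])

/-- for two colourings of an `n`-set, each with `k - 1` singleton colour
classes and one large class of size `n - k + 1`, whose large classes overlap in exactly
`n - k` elements, the union of their families of rainbow transversals has exactly
`2(n - k + 1) - 1` members; equivalently, the two families share exactly one `k`-subset. -/
theorem card_union_rainbow_transversals {V : Type*} [Fintype V] [DecidableEq V]
    {k n : ℕ} (hk : 3 ≤ k) (hn : k ≤ n) (hV : Fintype.card V = n)
    (c c' : V → Fin k)
    (hsmall : ∀ i : Fin k, (i : ℕ) < k - 1 →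
      (Finset.univ.filter fun v => c v = i).card = 1)
    (hbig : ∀ i : Fin k, (i : ℕ) = k - 1 →
      (Finset.univ.filter fun v => c v = i).card = n - k + 1)
    (hsmall' : ∀ i : Fin k, (i : ℕ) < k - 1 →
      (Finset.univ.filter fun v => c' v = i).card = 1)
    (hbig' : ∀ i : Fin k, (i : ℕ) = k - 1 →
      (Finset.univ.filter fun v => c' v = i).card = n - k + 1)
    (hoverlap : ((Finset.univ.filter fun v => (c v : ℕ) = k - 1) ∩
      (Finset.univ.filter fun v => (c' v : ℕ) = k - 1)).card = n - k) :
    (((Finset.univ.powersetCard k).filter fun e : Finset V =>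
        ∀ i : Fin k, ∃ v ∈ e, c v = i) ∪
      ((Finset.univ.powersetCard k).filter fun e : Finset V =>
        ∀ i : Fin k, ∃ v ∈ e, c' v = i)).card = 2 * (n - k + 1) - 1 ∧
    (((Finset.univ.powersetCard k).filter fun e : Finset V =>
        ∀ i : Fin k, ∃ v ∈ e, c v = i) ∩
      ((Finset.univ.powersetCard k).filter fun e : Finset V =>
        ∀ i : Fin k, ∃ v ∈ e, c' v = i)).card = 1 := by
  have hch := rainbow_char hk hn hV c hsmall hbig
  have hch' := rainbow_char hk hn hV c' hsmall' hbig'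
  rw [hch, hch']
  set B : Finset V := Finset.univ.filter fun v => (c v : ℕ) = k - 1 with hB
  set B' : Finset V := Finset.univ.filter fun v => (c' v : ℕ) = k - 1 with hB'
  have hBcard : B.card = n - k + 1 := by
    have := hbig ⟨k - 1, by omega⟩ rfl
    rw [hB]; convert this using 2; ext v; simp [Fin.ext_iff]
  have hBcard' : B'.card = n - k + 1 := by
    have := hbig' ⟨k - 1, by omega⟩ rfl
    rw [hB']; convert this using 2; ext v; simp [Fin.ext_iff]
  -- generic facts
  have key : ∀ (S : Finset V), S.card = n - k + 1 →
      (S.image (fun b => insert b Sᶜ)).card = n - k + 1 ∧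
      (∀ e ∈ S.image (fun b => insert b Sᶜ), e.card = k ∧ eᶜ ⊆ S ∧ eᶜ.card = n - k) := by
    intro S hS
    have hScompl : (Sᶜ).card = k - 1 := by
      have h1 := Finset.card_compl S
      have h2 : S.card ≤ Fintype.card V := Finset.card_le_univ S
      omega
    constructor
    · rw [Finset.card_image_of_injOn, hS]
      intro b hb b' hb' he
      simp only [Finset.mem_coe] at hb hb'
      simp only at he
      have h1 : b ∈ insert b' Sᶜ := by rw [← he]; exact Finset.mem_insert_self b Sᶜ
      rcases Finset.mem_insert.mp h1 with h | h
      · exact h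
      · exact absurd hb (by simpa using h)
    · intro e he
      obtain ⟨b, hb, rfl⟩ := Finset.mem_image.mp he
      have hbn : b ∉ Sᶜ := by simp [hb]
      have hcard : (insert b Sᶜ).card = k := by
        rw [Finset.card_insert_of_notMem hbn, hScompl]; omega
      refine ⟨hcard, ?_, ?_⟩
      · rw [Finset.compl_insert, compl_compl]
        exact (Finset.erase_subset _ _).trans (le_refl S)
      · rw [Finset.card_compl, hcard, hV]
  obtain ⟨hA, hAe⟩ := key B hBcard
  obtain ⟨hA', hAe'⟩ := key B' hBcard'
  -- the unique common element
  have hsd : (B \ B').card = 1 := by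
    have := Finset.card_inter_add_card_sdiff B B'
    omega
  have hsd' : (B' \ B).card = 1 := by
    have := Finset.card_inter_add_card_sdiff B' B
    rw [Finset.inter_comm] at this
    omega
  obtain ⟨b0, hb0⟩ := Finset.card_eq_one.mp hsd
  obtain ⟨b1, hb1⟩ := Finset.card_eq_one.mp hsd'
  have hmem : ∀ (S T : Finset V) (b : V), S \ T = {b} →
      (S ∩ T)ᶜ = insert b Sᶜ := by
    intro S T b hST
    ext x
    simp only [Finset.mem_compl, Finset.mem_inter, Finset.mem_insert, not_and_or]
    constructor
    · rintro (h | h)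
      · exact Or.inr (by simpa using h)
      · by_cases hx : x ∈ S
        · have : x ∈ S \ T := Finset.mem_sdiff.mpr ⟨hx, h⟩
          rw [hST] at this
          exact Or.inl (Finset.mem_singleton.mp this)
        · exact Or.inr (by simpa using hx)
    · rintro (h | h)
      · have hbm : b ∈ S \ T := hST ▸ Finset.mem_singleton_self b
        subst h
        exact Or.inr (Finset.mem_sdiff.mp hbm).2
      · exact Or.inl (by simpa using h)
  have hinter : (B.image (fun b => insert b Bᶜ)) ∩ (B'.image (fun b => insert b B'ᶜ))
      = {(B ∩ B')ᶜ} := by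
    ext e
    simp only [Finset.mem_inter, Finset.mem_singleton]
    constructor
    · rintro ⟨he, he'⟩
      obtain ⟨hec, heB, hecard⟩ := hAe e he
      obtain ⟨-, heB', -⟩ := hAe' e he'
      have hsub : eᶜ ⊆ B ∩ B' := Finset.subset_inter heB heB'
      have : eᶜ = B ∩ B' := Finset.eq_of_subset_of_card_le hsub (by omega)
      rw [← this, compl_compl]
    · rintro rfl
      constructor
      · rw [hmem B B' b0 hb0]
        have hb0B : b0 ∈ B := (Finset.mem_sdiff.mp (hb0 ▸ Finset.mem_singleton_self b0)).1
        exact Finset.mem_image.mpr ⟨b0, hb0B, rfl⟩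
      · rw [Finset.inter_comm, hmem B' B b1 hb1]
        have hb1B : b1 ∈ B' := (Finset.mem_sdiff.mp (hb1 ▸ Finset.mem_singleton_self b1)).1
        exact Finset.mem_image.mpr ⟨b1, hb1B, rfl⟩
  have hintercard : ((B.image (fun b => insert b Bᶜ)) ∩ (B'.image (fun b => insert b B'ᶜ))).card = 1 := by
    rw [hinter]; simp
  refine ⟨?_, hintercard⟩
  have := Finset.card_union_add_card_inter (B.image (fun b => insert b Bᶜ))
    (B'.image (fun b => insert b B'ᶜ))
  omega
end
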